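/- Let G be a finite simple graph without isolated vertices, with minimum degree δ and maximum degree Δ, and let a > 0 be a real number. Then Δ^{-2a}·ISD_{-a}(G) ≤ ISD_a(G) ≤ δ^{-2a}·ISD_{-a}(G), and equality holds in either bound if and only if G is regular. -/

import Mathlib

open Finset Real

noncomputable def ISD {V : Type*} [Fintype V] [DecidableEq V] (G : SimpleGraph V)
    [DecidableRel G.Adj] (a : ℝ) : ℝ :=
  ∑ e ∈ G.edgeFinset,
    Sym2.lift ⟨fun u v => 1 / ((G.degree u : ℝ) ^ a + (G.degree v : ℝ) ^ a),
      fun u v => by simp [add_comm]⟩ e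

lemma isd_aux_le (x y D : ℝ) (hx : 0 < x) (hy : 0 < y) (hxD : x ≤ D) (hyD : y ≤ D) :
    (D ^ 2)⁻¹ * (1 / (x⁻¹ + y⁻¹)) ≤ 1 / (x + y) := by
  have hD : 0 < D := lt_of_lt_of_le hx hxD
  have h1 : (D ^ 2)⁻¹ * (1 / (x⁻¹ + y⁻¹)) = x * y / (D ^ 2 * (x + y)) := by
    field_simp; ring
  rw [h1, div_le_div_iff₀ (by positivity) (by positivity)]
  have h2 : x * y ≤ D ^ 2 := by nlinarith
  nlinarith [mul_le_mul_of_nonneg_right h2 (le_of_lt (add_pos hx hy))]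

lemma isd_aux_le_eq (x y D : ℝ) (hx : 0 < x) (hy : 0 < y) (hxD : x ≤ D) (hyD : y ≤ D) :
    (D ^ 2)⁻¹ * (1 / (x⁻¹ + y⁻¹)) = 1 / (x + y) ↔ x = D ∧ y = D := by
  have hD : 0 < D := lt_of_lt_of_le hx hxD
  have h1 : (D ^ 2)⁻¹ * (1 / (x⁻¹ + y⁻¹)) = x * y / (D ^ 2 * (x + y)) := by
    field_simp; ring
  rw [h1, div_eq_div_iff (by positivity) (by positivity)]
  constructor
  · intro h
    have hxy : x * y = D ^ 2 := by
      have h2 : (x * y - D ^ 2) * (x + y) = 0 := by nlinarith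
      rcases mul_eq_zero.1 h2 with h3 | h3
      · linarith
      · nlinarith
    have hxx : D ≤ x := by nlinarith
    have hyy : D ≤ y := by nlinarith
    exact ⟨le_antisymm hxD hxx, le_antisymm hyD hyy⟩
  · rintro ⟨rfl, rfl⟩; ring

lemma isd_aux_ge (x y m : ℝ) (hm : 0 < m) (hmx : m ≤ x) (hmy : m ≤ y) :
    1 / (x + y) ≤ (m ^ 2)⁻¹ * (1 / (x⁻¹ + y⁻¹)) := by
  have hx : 0 < x := lt_of_lt_of_le hm hmx
  have hy : 0 < y := lt_of_lt_of_le hm hmy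
  have h1 : (m ^ 2)⁻¹ * (1 / (x⁻¹ + y⁻¹)) = x * y / (m ^ 2 * (x + y)) := by
    field_simp; ring
  rw [h1, div_le_div_iff₀ (by positivity) (by positivity)]
  have h2 : m ^ 2 ≤ x * y := by nlinarith
  nlinarith [mul_le_mul_of_nonneg_right h2 (le_of_lt (add_pos hx hy))]

lemma isd_aux_ge_eq (x y m : ℝ) (hm : 0 < m) (hmx : m ≤ x) (hmy : m ≤ y) :
    1 / (x + y) = (m ^ 2)⁻¹ * (1 / (x⁻¹ + y⁻¹)) ↔ x = m ∧ y = m := by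
  have hx : 0 < x := lt_of_lt_of_le hm hmx
  have hy : 0 < y := lt_of_lt_of_le hm hmy
  have h1 : (m ^ 2)⁻¹ * (1 / (x⁻¹ + y⁻¹)) = x * y / (m ^ 2 * (x + y)) := by
    field_simp; ring
  rw [h1, div_eq_div_iff (by positivity) (by positivity)]
  constructor
  · intro h
    have hxy : x * y = m ^ 2 := by
      have h2 : (x * y - m ^ 2) * (x + y) = 0 := by nlinarith
      rcases mul_eq_zero.1 h2 with h3 | h3
      · linarith
      · nlinarith
    have hxx : x ≤ m := by nlinarith
    have hyy : y ≤ m := by nlinarith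
    exact ⟨le_antisymm hxx hmx, le_antisymm hyy hmy⟩
  · rintro ⟨rfl, rfl⟩; ring

lemma isd_rpow_nat_inj {a : ℝ} (ha : 0 < a) {m n : ℕ} (h : (m : ℝ) ^ a = (n : ℝ) ^ a) :
    m = n := by
  rcases lt_trichotomy m n with hlt | he | hlt
  · exact absurd h (ne_of_lt (Real.rpow_lt_rpow (by positivity) (by exact_mod_cast hlt) ha))
  · exact he
  · exact absurd h.symm (ne_of_lt (Real.rpow_lt_rpow (by positivity) (by exact_mod_cast hlt) ha))

lemma isd_rpow_sq {c : ℝ} (hc : 0 ≤ c) (a : ℝ) : c ^ (-(2 * a)) = ((c ^ a) ^ 2)⁻¹ := by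
  rw [Real.rpow_neg hc, show (2 : ℝ) * a = a * 2 by ring, Real.rpow_mul hc,
    ← Real.rpow_natCast (c ^ a) 2]
  norm_num

/-- per-edge term of ISD -/
noncomputable def ISDterm {V : Type*} [Fintype V] [DecidableEq V] (G : SimpleGraph V)
    [DecidableRel G.Adj] (a : ℝ) : Sym2 V → ℝ :=
  Sym2.lift ⟨fun u v => 1 / ((G.degree u : ℝ) ^ a + (G.degree v : ℝ) ^ a),
      fun u v => by simp [add_comm]⟩

lemma ISD_eq {V : Type*} [Fintype V] [DecidableEq V] (G : SimpleGraph V)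
    [DecidableRel G.Adj] (a : ℝ) : ISD G a = ∑ e ∈ G.edgeFinset, ISDterm G a e := rfl

lemma ISDterm_mk {V : Type*} [Fintype V] [DecidableEq V] (G : SimpleGraph V)
    [DecidableRel G.Adj] (a : ℝ) (u v : V) :
    ISDterm G a s(u, v) = 1 / ((G.degree u : ℝ) ^ a + (G.degree v : ℝ) ^ a) := rfl

theorem stmt_4 {V : Type*} [Fintype V] [DecidableEq V] [Nonempty V] (G : SimpleGraph V)
    [DecidableRel G.Adj] (hiso : ∀ v : V, 0 < G.degree v) (a : ℝ) (ha : 0 < a) :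
    (((G.maxDegree : ℝ) ^ (-(2 * a)) * ISD G (-a) ≤ ISD G a ∧
      ISD G a ≤ (G.minDegree : ℝ) ^ (-(2 * a)) * ISD G (-a)) ∧
    (ISD G a = (G.maxDegree : ℝ) ^ (-(2 * a)) * ISD G (-a) ↔ ∃ k, ∀ v : V, G.degree v = k) ∧
    (ISD G a = (G.minDegree : ℝ) ^ (-(2 * a)) * ISD G (-a) ↔ ∃ k, ∀ v : V, G.degree v = k)) := by
  classical
  have hΔpos : 0 < G.maxDegree :=
    lt_of_lt_of_le (hiso (Classical.arbitrary V)) (G.degree_le_maxDegree _)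
  have hδpos : 0 < G.minDegree := by
    obtain ⟨v, hv⟩ := G.exists_minimal_degree_vertex
    rw [hv]; exact hiso v
  -- per-edge facts
  have key : ∀ e ∈ G.edgeFinset,
      ((G.maxDegree : ℝ) ^ (-(2 * a)) * ISDterm G (-a) e ≤ ISDterm G a e ∧
        ISDterm G a e ≤ (G.minDegree : ℝ) ^ (-(2 * a)) * ISDterm G (-a) e) ∧
      ((G.maxDegree : ℝ) ^ (-(2 * a)) * ISDterm G (-a) e = ISDterm G a e ↔
        ∀ w ∈ e, G.degree w = G.maxDegree) ∧
      (ISDterm G a e = (G.minDegree : ℝ) ^ (-(2 * a)) * ISDterm G (-a) e ↔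
        ∀ w ∈ e, G.degree w = G.minDegree) := by
    intro e he
    induction e using Sym2.ind with
    | _ u v =>
      set x : ℝ := (G.degree u : ℝ) ^ a with hxdef
      set y : ℝ := (G.degree v : ℝ) ^ a with hydef
      set D : ℝ := (G.maxDegree : ℝ) ^ a with hDdef
      set M : ℝ := (G.minDegree : ℝ) ^ a with hMdef
      have hx : 0 < x := Real.rpow_pos_of_pos (by exact_mod_cast hiso u) a
      have hy : 0 < y := Real.rpow_pos_of_pos (by exact_mod_cast hiso v) a
      have hM : 0 < M := Real.rpow_pos_of_pos (by exact_mod_cast hδpos) a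
      have hxD : x ≤ D :=
        Real.rpow_le_rpow (by positivity) (by exact_mod_cast G.degree_le_maxDegree u) ha.le
      have hyD : y ≤ D :=
        Real.rpow_le_rpow (by positivity) (by exact_mod_cast G.degree_le_maxDegree v) ha.le
      have hMx : M ≤ x :=
        Real.rpow_le_rpow (by positivity) (by exact_mod_cast G.minDegree_le_degree u) ha.le
      have hMy : M ≤ y :=
        Real.rpow_le_rpow (by positivity) (by exact_mod_cast G.minDegree_le_degree v) ha.le
      have hterm_a : ISDterm G a s(u, v) = 1 / (x + y) := rfl
      have hterm_na : ISDterm G (-a) s(u, v) = 1 / (x⁻¹ + y⁻¹) := by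
        rw [ISDterm_mk, Real.rpow_neg (by positivity), Real.rpow_neg (by positivity)]
      have hΔ2 : (G.maxDegree : ℝ) ^ (-(2 * a)) = (D ^ 2)⁻¹ := isd_rpow_sq (by positivity) a
      have hδ2 : (G.minDegree : ℝ) ^ (-(2 * a)) = (M ^ 2)⁻¹ := isd_rpow_sq (by positivity) a
      have hxDiff : x = D ↔ G.degree u = G.maxDegree :=
        ⟨fun h => isd_rpow_nat_inj ha h, fun h => by rw [hxdef, h]⟩
      have hyDiff : y = D ↔ G.degree v = G.maxDegree :=
        ⟨fun h => isd_rpow_nat_inj ha h, fun h => by rw [hydef, h]⟩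
      have hxMiff : x = M ↔ G.degree u = G.minDegree :=
        ⟨fun h => isd_rpow_nat_inj ha h, fun h => by rw [hxdef, h]⟩
      have hyMiff : y = M ↔ G.degree v = G.minDegree :=
        ⟨fun h => isd_rpow_nat_inj ha h, fun h => by rw [hydef, h]⟩
      rw [hterm_a, hterm_na, hΔ2, hδ2]
      refine ⟨⟨isd_aux_le x y D hx hy hxD hyD, isd_aux_ge x y M hM hMx hMy⟩, ?_, ?_⟩
      · rw [isd_aux_le_eq x y D hx hy hxD hyD, hxDiff, hyDiff]
        exact (Sym2.ball (p := fun w => G.degree w = G.maxDegree)).symm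
      · rw [isd_aux_ge_eq x y M hM hMx hMy, hxMiff, hyMiff]
        exact (Sym2.ball (p := fun w => G.degree w = G.minDegree)).symm
  -- regularity equivalence
  have hreg : ∀ c : ℕ, (∃ v, G.degree v = c) →
      ((∀ e ∈ G.edgeFinset, ∀ w ∈ e, G.degree w = c) ↔ ∃ k, ∀ v : V, G.degree v = k) := by
    intro c hex
    constructor
    · intro h
      refine ⟨c, fun v => ?_⟩
      obtain ⟨w, hw⟩ := (G.degree_pos_iff_exists_adj v).1 (hiso v)
      exact h s(v, w) (by simpa [SimpleGraph.mem_edgeFinset] using hw) v (by simp)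
    · rintro ⟨k, hk⟩ e he w _
      obtain ⟨v0, hv0⟩ := hex
      rw [hk w, ← hv0, hk v0]
  have hregΔ : (∀ e ∈ G.edgeFinset, ∀ w ∈ e, G.degree w = G.maxDegree) ↔
      ∃ k, ∀ v : V, G.degree v = k := by
    obtain ⟨v, hv⟩ := G.exists_maximal_degree_vertex
    exact hreg G.maxDegree ⟨v, hv.symm⟩
  have hregδ : (∀ e ∈ G.edgeFinset, ∀ w ∈ e, G.degree w = G.minDegree) ↔
      ∃ k, ∀ v : V, G.degree v = k := by
    obtain ⟨v, hv⟩ := G.exists_minimal_degree_vertex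
    exact hreg G.minDegree ⟨v, hv.symm⟩
  -- assemble sums
  have hmulΔ : (G.maxDegree : ℝ) ^ (-(2 * a)) * ISD G (-a) =
      ∑ e ∈ G.edgeFinset, (G.maxDegree : ℝ) ^ (-(2 * a)) * ISDterm G (-a) e := by
    rw [ISD_eq, Finset.mul_sum]
  have hmulδ : (G.minDegree : ℝ) ^ (-(2 * a)) * ISD G (-a) =
      ∑ e ∈ G.edgeFinset, (G.minDegree : ℝ) ^ (-(2 * a)) * ISDterm G (-a) e := by
    rw [ISD_eq, Finset.mul_sum]
  refine ⟨⟨?_, ?_⟩, ?_, ?_⟩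
  · rw [hmulΔ, ISD_eq]
    exact Finset.sum_le_sum fun e he => (key e he).1.1
  · rw [hmulδ, ISD_eq]
    exact Finset.sum_le_sum fun e he => (key e he).1.2
  · rw [← hregΔ, ISD_eq, hmulΔ, eq_comm,
      Finset.sum_eq_sum_iff_of_le fun e he => (key e he).1.1]
    exact forall₂_congr fun e he => (key e he).2.1
  · rw [← hregδ, ISD_eq, hmulδ,
      Finset.sum_eq_sum_iff_of_le fun e he => (key e he).1.2]
    exact forall₂_congr fun e he => (key e he).2.2
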